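/- Let F̄ : [0, ∞) → [0, 1] be nonincreasing with F̄(0) = 1 (the tail distribution of an almost surely positive random variable X). If F̄ is log-concave on [0, ∞), then for every integer r ≥ 1, r · ∫_0^∞ F̄(x)^r dx ≤ (r+1) · ∫_0^∞ F̄(x)^{r+1} dx; that is, r · E[X_{1:r}] is nondecreasing in r, where X_{1:r} denotes the minimum of r i.i.d. copies of X. If F̄ is log-convex on [0, ∞), the reverse inequality holds for every r ≥ 1, i.e. r · E[X_{1:r}] is nonincreasing in r. -/

import Mathlib

open MeasureTheory
open scoped ENNReal

/-- `f` is log-concave on `D`: `f(θx + (1−θ)y) ≥ f(x)^θ f(y)^{1−θ}`. -/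
def LogConcaveOn (D : Set ℝ) (f : ℝ → ℝ) : Prop :=
  ∀ ⦃x⦄, x ∈ D → ∀ ⦃y⦄, y ∈ D → ∀ ⦃θ : ℝ⦄, θ ∈ Set.Icc (0 : ℝ) 1 →
    f x ^ θ * f y ^ (1 - θ) ≤ f (θ * x + (1 - θ) * y)

/-- `f` is log-convex on `D`: `f(θx + (1−θ)y) ≤ f(x)^θ f(y)^{1−θ}`. -/
def LogConvexOn (D : Set ℝ) (f : ℝ → ℝ) : Prop :=
  ∀ ⦃x⦄, x ∈ D → ∀ ⦃y⦄, y ∈ D → ∀ ⦃θ : ℝ⦄, θ ∈ Set.Icc (0 : ℝ) 1 →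
    f (θ * x + (1 - θ) * y) ≤ f x ^ θ * f y ^ (1 - θ)

/-- For a tail distribution `F̄` (nonincreasing on `[0,∞)`, `F̄(0) = 1`):
if `F̄` is log-concave then `r ↦ r·E[X_{1:r}] = r·∫_0^∞ F̄(x)^r dx` is nondecreasing in `r`,
and if `F̄` is log-convex then it is nonincreasing in `r`. -/

lemma subst_lemma (g : ℝ → ℝ≥0∞) (hg : Measurable g) {c : ℝ} (hc : 0 < c) :
    ∫⁻ x in Set.Ioi (0:ℝ), g (x / c) = ENNReal.ofReal c * ∫⁻ x in Set.Ioi (0:ℝ), g x := by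
  have hpre : ((c⁻¹ * ·) : ℝ → ℝ) ⁻¹' Set.Ioi 0 = Set.Ioi 0 := by
    ext x
    simp only [Set.mem_preimage, Set.mem_Ioi]
    constructor
    · intro h
      have := mul_pos hc h
      rwa [← mul_assoc, mul_inv_cancel₀ hc.ne', one_mul] at this
    · intro h; positivity
  have hmeas : Measurable ((c⁻¹ * ·) : ℝ → ℝ) := measurable_const_mul _
  have h1 : ∫⁻ x in Set.Ioi (0:ℝ), g (x / c) = ∫⁻ x in Set.Ioi (0:ℝ), g (c⁻¹ * x) := by
    simp [div_eq_inv_mul]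
  have h2 : Measure.map ((c⁻¹ * ·) : ℝ → ℝ) (volume.restrict (Set.Ioi 0)) =
      (ENNReal.ofReal c) • volume.restrict (Set.Ioi 0) := by
    conv_lhs => rw [← hpre]
    rw [← Measure.restrict_map hmeas measurableSet_Ioi,
      Real.map_volume_mul_left (by positivity : c⁻¹ ≠ 0), inv_inv, abs_of_pos hc,
      Measure.restrict_smul]
  rw [h1, ← lintegral_map hg hmeas, h2, lintegral_smul_measure, smul_eq_mul]

section keys
variable (F : ℝ → ℝ) (hrange : ∀ x ≥ (0 : ℝ), F x ∈ Set.Icc (0 : ℝ) 1) (h0 : F 0 = 1)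
  (r : ℕ) (hr : 1 ≤ r) (x : ℝ) (hx : 0 < x)

lemma theta_mem : (r:ℝ)/(r+1) ∈ Set.Icc (0:ℝ) 1 := by
  have hr0 : (0:ℝ) < r + 1 := by positivity
  constructor
  · positivity
  · rw [div_le_one hr0]; linarith

include hr in
lemma comb_eq : ((r:ℝ)/(r+1)) * (x / r) + (1 - (r:ℝ)/(r+1)) * 0 = x / (r+1) := by
  have hr0 : (0:ℝ) < r := by exact_mod_cast hr
  have h1 : (r:ℝ) ≠ 0 := hr0.ne'
  have h2 : (r:ℝ) + 1 ≠ 0 := by positivity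
  field_simp
  ring

include hrange h0 hr hx in
lemma key_conc (hconc : LogConcaveOn (Set.Ici 0) F) :
    F (x / r) ^ r ≤ F (x / (r+1)) ^ (r+1) := by
  have hr0 : (0:ℝ) < r := by exact_mod_cast hr
  have ha : x / (r:ℝ) ∈ Set.Ici (0:ℝ) := le_of_lt (by positivity : (0:ℝ) < x / (r:ℝ))
  have h1 := hconc ha (Set.self_mem_Ici (a := (0:ℝ))) (theta_mem r)
  rw [comb_eq r hr x, h0, Real.one_rpow, mul_one] at h1
  have hFa : 0 ≤ F (x / r) := (hrange _ ha).1
  have h2 := Real.rpow_le_rpow (Real.rpow_nonneg hFa _) h1 (by positivity : (0:ℝ) ≤ (r:ℝ)+1)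
  rw [← Real.rpow_natCast (F (x/r)) r, ← Real.rpow_natCast (F (x/(r+1))) (r+1),
    Nat.cast_add, Nat.cast_one]
  calc F (x/(r:ℝ)) ^ ((r:ℝ)) = (F (x/(r:ℝ)) ^ ((r:ℝ)/(r+1))) ^ ((r:ℝ)+1) := by
        rw [← Real.rpow_mul hFa]
        congr 1
        field_simp
    _ ≤ _ := h2

include hrange h0 hr hx in
lemma key_conv (hconv : LogConvexOn (Set.Ici 0) F) :
    F (x / (r+1)) ^ (r+1) ≤ F (x / r) ^ r := by
  have hr0 : (0:ℝ) < r := by exact_mod_cast hr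
  have ha : x / (r:ℝ) ∈ Set.Ici (0:ℝ) := le_of_lt (by positivity : (0:ℝ) < x / (r:ℝ))
  have hb : x / ((r:ℝ)+1) ∈ Set.Ici (0:ℝ) := le_of_lt (by positivity : (0:ℝ) < x / ((r:ℝ)+1))
  have h1 := hconv ha (Set.self_mem_Ici (a := (0:ℝ))) (theta_mem r)
  rw [comb_eq r hr x, h0, Real.one_rpow, mul_one] at h1
  have hFa : 0 ≤ F (x / r) := (hrange _ ha).1
  have hFb : 0 ≤ F (x / ((r:ℝ)+1)) := (hrange _ hb).1
  have h2 := Real.rpow_le_rpow hFb h1 (by positivity : (0:ℝ) ≤ (r:ℝ)+1)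
  rw [← Real.rpow_natCast (F (x/r)) r, ← Real.rpow_natCast (F (x/(r+1))) (r+1),
    Nat.cast_add, Nat.cast_one]
  calc F (x/((r:ℝ)+1)) ^ ((r:ℝ)+1) ≤ (F (x/(r:ℝ)) ^ ((r:ℝ)/(r+1))) ^ ((r:ℝ)+1) := h2
    _ = F (x/(r:ℝ)) ^ ((r:ℝ)) := by
        rw [← Real.rpow_mul hFa]
        congr 1
        field_simp

end keys

theorem r_expected_min_monotone (F : ℝ → ℝ)
    (hrange : ∀ x ≥ (0 : ℝ), F x ∈ Set.Icc (0 : ℝ) 1)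
    (hmono : AntitoneOn F (Set.Ici 0)) (h0 : F 0 = 1) :
    (LogConcaveOn (Set.Ici 0) F →
      ∀ r : ℕ, 1 ≤ r →
        (r : ℝ≥0∞) * ∫⁻ x in Set.Ioi (0 : ℝ), ENNReal.ofReal (F x ^ r)
          ≤ ((r : ℝ≥0∞) + 1) * ∫⁻ x in Set.Ioi (0 : ℝ), ENNReal.ofReal (F x ^ (r + 1))) ∧
    (LogConvexOn (Set.Ici 0) F →
      ∀ r : ℕ, 1 ≤ r →
        ((r : ℝ≥0∞) + 1) * ∫⁻ x in Set.Ioi (0 : ℝ), ENNReal.ofReal (F x ^ (r + 1))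
          ≤ (r : ℝ≥0∞) * ∫⁻ x in Set.Ioi (0 : ℝ), ENNReal.ofReal (F x ^ r)) := by
  set G : ℝ → ℝ := fun y => if 0 ≤ y then F y else 1 with hG
  have hGanti : Antitone G := by
    intro a b hab
    simp only [hG]
    by_cases ha : 0 ≤ a
    · rw [if_pos ha, if_pos (ha.trans hab)]
      exact hmono ha (ha.trans hab) hab
    · rw [if_neg ha]
      by_cases hb : 0 ≤ b
      · rw [if_pos hb]; exact (hrange b hb).2
      · rw [if_neg hb]
  have hGmeas : Measurable G := hGanti.measurable
  have hg : ∀ n : ℕ, Measurable (fun x => ENNReal.ofReal (G x ^ n)) :=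
    fun n => (hGmeas.pow_const n).ennreal_ofReal
  have hcongr : ∀ n : ℕ, ∫⁻ x in Set.Ioi (0:ℝ), ENNReal.ofReal (F x ^ n)
      = ∫⁻ x in Set.Ioi (0:ℝ), ENNReal.ofReal (G x ^ n) := by
    intro n
    refine setLIntegral_congr_fun measurableSet_Ioi (fun x hx => ?_)
    simp [hG, le_of_lt (Set.mem_Ioi.mp hx)]
  have hscale : ∀ n : ℕ, 1 ≤ n →
      (n : ℝ≥0∞) * ∫⁻ x in Set.Ioi (0:ℝ), ENNReal.ofReal (G x ^ n)
        = ∫⁻ x in Set.Ioi (0:ℝ), ENNReal.ofReal (G (x / (n:ℝ)) ^ n) := by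
    intro n hn
    have hn0 : (0:ℝ) < n := by exact_mod_cast hn
    rw [subst_lemma _ (hg n) hn0, ENNReal.ofReal_natCast]
  have hmeas2 : ∀ (c : ℝ) (n : ℕ),
      Measurable (fun x : ℝ => ENNReal.ofReal (G (x / c) ^ n)) := fun c n =>
    (((hGmeas.comp (measurable_id.div_const c)).pow_const n).ennreal_ofReal)
  have hcast : ∀ r : ℕ, ((r : ℝ≥0∞) + 1) = ((r+1 : ℕ) : ℝ≥0∞) := by
    intro r; push_cast; ring
  constructor
  · intro hconc r hr
    rw [hcongr r, hcongr (r+1), hcast r, hscale r hr, hscale (r+1) (by omega)]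
    refine setLIntegral_mono (hmeas2 _ _) fun x hx => ?_
    have hx0 : 0 < x := Set.mem_Ioi.mp hx
    have hr0 : (0:ℝ) < r := by exact_mod_cast hr
    have e1 : G (x/(r:ℝ)) = F (x/(r:ℝ)) := if_pos (by positivity)
    have e2 : G (x/((r+1:ℕ):ℝ)) = F (x/((r+1:ℕ):ℝ)) := if_pos (by positivity)
    rw [e1, e2]
    apply ENNReal.ofReal_le_ofReal
    have := key_conc F hrange h0 r hr x hx0 hconc
    push_cast
    convert this using 3 <;> push_cast <;> try ring
  · intro hconv r hr
    rw [hcongr r, hcongr (r+1), hcast r, hscale r hr, hscale (r+1) (by omega)]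
    refine setLIntegral_mono (hmeas2 _ _) fun x hx => ?_
    have hx0 : 0 < x := Set.mem_Ioi.mp hx
    have hr0 : (0:ℝ) < r := by exact_mod_cast hr
    have e1 : G (x/(r:ℝ)) = F (x/(r:ℝ)) := if_pos (by positivity)
    have e2 : G (x/((r+1:ℕ):ℝ)) = F (x/((r+1:ℕ):ℝ)) := if_pos (by positivity)
    rw [e1, e2]
    apply ENNReal.ofReal_le_ofReal
    have := key_conv F hrange h0 r hr x hx0 hconv
    push_cast
    convert this using 3 <;> push_cast <;> try ring
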